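/- G_A admits the presentation ⟨x, y | y³, [x⁻ⁿyxⁿ, x⁻ᵐyxᵐ] (n, m ∈ ℤ)⟩: the homomorphism from the free group on two generators x, y to G_A sending x ↦ a and y ↦ α is surjective, and its kernel equals the normal closure of the set {y³} ∪ {[x⁻ⁿyxⁿ, x⁻ᵐyxᵐ] : n, m ∈ ℤ}. -/

import Mathlib

/-!
We formalize the automaton `A` of the paper: alphabet `X = {1,2,3}` is encoded as
`Fin 3` (letter `i+1` ↦ `i`), states `a, b, c` are encoded as `0, 1, 2 : Fin 3`.
Each state induces a permutation of the space `ℕ → Fin 3` of infinite sequences.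

Note on conventions: in the paper, products of tree automorphisms compose
left-to-right (in a word `s₁s₂⋯sₙ`, the letter `s₁` acts first); in Mathlib,
`(f * g) w = f (g w)`, i.e. the right factor acts first.  Hence a paper word
`uv` is rendered as the Lean product `v * u`; e.g. the paper's `α = ab⁻¹`
(apply `a`, then `b⁻¹`) is `b⁻¹ * a` below.
-/

namespace Lamplighter

section Generic

variable {S X : Type*}

/-- The state of the automaton after reading the first `n` letters of `w`, starting at `s`. -/
def run (nxt : S → X → S) (s : S) (w : ℕ → X) : ℕ → S
  | 0 => s
  | n + 1 => nxt (run nxt s w n) (w n)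

/-- The output sequence of the automaton started in state `s` reading `w`. -/
def fwd (nxt : S → X → S) (out : S → Equiv.Perm X) (s : S) (w : ℕ → X) : ℕ → X :=
  fun n => out (run nxt s w n) (w n)

/-- Transition function of the inverse automaton. -/
def invNxt (nxt : S → X → S) (out : S → Equiv.Perm X) (s : S) (y : X) : S :=
  nxt s ((out s).symm y)

/-- The action of the inverse automaton, started at state `s`. -/
def bwd (nxt : S → X → S) (out : S → Equiv.Perm X) (s : S) (y : ℕ → X) : ℕ → X :=
  fun n => (out (run (invNxt nxt out) s y n)).symm (y n)

theorem run_inv_fwd (nxt : S → X → S) (out : S → Equiv.Perm X) (s : S) (w : ℕ → X) :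
    ∀ n, run (invNxt nxt out) s (fwd nxt out s w) n = run nxt s w n := by
  intro n
  induction n with
  | zero => rfl
  | succ n ih => simp [run, ih, invNxt, fwd]

theorem run_bwd (nxt : S → X → S) (out : S → Equiv.Perm X) (s : S) (y : ℕ → X) :
    ∀ n, run nxt s (bwd nxt out s y) n = run (invNxt nxt out) s y n := by
  intro n
  induction n with
  | zero => rfl
  | succ n ih => simp [run, ih, bwd, invNxt]

/-- The permutation of the space of infinite sequences induced by state `s`
of an invertible automaton. -/
def statePerm (nxt : S → X → S) (out : S → Equiv.Perm X) (s : S) : Equiv.Perm (ℕ → X) where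
  toFun := fwd nxt out s
  invFun := bwd nxt out s
  left_inv := fun w => funext fun n => by simp [bwd, run_inv_fwd, fwd]
  right_inv := fun y => funext fun n => by simp [fwd, run_bwd, bwd]

end Generic

/-- The alphabet `X = {1,2,3}`, encoded as `Fin 3`. -/
abbrev X3 := Fin 3

/-- Transition function of the automaton `A` (states `a = 0`, `b = 1`, `c = 2`):
from `a`: `1 ↦ a, 2 ↦ b, 3 ↦ c`; from `b`: `1 ↦ c, 2 ↦ a, 3 ↦ b`;
from `c`: `1 ↦ b, 2 ↦ c, 3 ↦ a`. -/
def nxtA : Fin 3 → X3 → Fin 3 := ![![0, 1, 2], ![2, 0, 1], ![1, 2, 0]]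

/-- Output permutations of the automaton `A`: state `a` acts on letters as the
transposition `(2 3)`, state `b` as `(1 3)`, state `c` as `(1 2)`. -/
def outA : Fin 3 → Equiv.Perm X3 := ![Equiv.swap 1 2, Equiv.swap 0 2, Equiv.swap 0 1]

/-- The permutation of `X^ℕ` given by state `a`. -/
def a : Equiv.Perm (ℕ → X3) := statePerm nxtA outA 0

/-- The permutation of `X^ℕ` given by state `b`. -/
def b : Equiv.Perm (ℕ → X3) := statePerm nxtA outA 1

/-- The permutation of `X^ℕ` given by state `c`. -/
def c : Equiv.Perm (ℕ → X3) := statePerm nxtA outA 2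

/-- The group `G_A` generated by the automaton `A`. -/
def GA : Subgroup (Equiv.Perm (ℕ → X3)) := Subgroup.closure {a, b, c}

/-- The element `α = ab⁻¹` of the paper (first apply `a`, then `b⁻¹`). -/
def α : Equiv.Perm (ℕ → X3) := b⁻¹ * a

/-- The set `W` of permutations acting coordinatewise by a sequence of even
permutations of the alphabet. -/
def W : Set (Equiv.Perm (ℕ → X3)) :=
  {g | ∃ π : ℕ → Equiv.Perm X3, (∀ n, Equiv.Perm.sign (π n) = 1) ∧
    ∀ (w : ℕ → X3) (n : ℕ), g w n = π n (w n)}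

/-- The subgroup `N` generated by the conjugates `a⁻ⁿ α aⁿ`, `n ∈ ℤ`
(in Lean's composition order: `aⁿ * α * a⁻ⁿ`). -/
def N : Subgroup (Equiv.Perm (ℕ → X3)) :=
  Subgroup.closure {g | ∃ n : ℤ, g = a ^ n * α * a ^ (-n)}
open Fin.CommRing

open scoped commutatorElement

section Analysis

/-- The sequence space. -/
abbrev V : Type := ℕ → X3

instance : NoZeroDivisors X3 := ⟨by decide⟩

/-- The constant sequence. -/
def cs (s : X3) : V := fun _ => s

/-- Coordinatewise translation by `t`. -/
def T (t : V) : Equiv.Perm (ℕ → X3) := Equiv.addRight t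

lemma T_apply (t : V) (w : ℕ → X3) : T t w = w + t := rfl

lemma nxtA_eq : ∀ s x : X3, nxtA s x = x - s := by decide

lemma outA_eq : ∀ s x : X3, outA s x = -x - s := by decide

lemma runA_succ (s : X3) (w : V) (n : ℕ) :
    run nxtA s w (n + 1) = w n - run nxtA s w n := by
  show nxtA _ _ = _
  rw [nxtA_eq]

lemma statePerm_apply (s : X3) (w : V) (n : ℕ) :
    statePerm nxtA outA s w n = -(w n) - run nxtA s w n := by
  show outA _ _ = _
  rw [outA_eq]

lemma cs_apply (s : X3) (n : ℕ) : cs s n = s := rfl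

lemma add_apply (w v : V) (n : ℕ) : (w + v) n = w n + v n := rfl

lemma run_shift (s : X3) (w : V) : ∀ n,
    run nxtA s w n = run nxtA 0 (w + cs s) n + s := by
  intro n
  induction n with
  | zero => show s = 0 + s; rw [zero_add]
  | succ n ih =>
      rw [runA_succ, runA_succ, ih, add_apply, cs_apply]
      have h3 : ∀ s : X3, s + s + s = 0 := by decide
      linear_combination (-1 : X3) * h3 s

lemma statePerm_eq (s : X3) : statePerm nxtA outA s = a * T (cs s) := by
  apply Equiv.ext
  intro w
  funext n
  have h1 : (a * T (cs s)) w = a (w + cs s) := rfl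
  rw [h1]
  show statePerm nxtA outA s w n = statePerm nxtA outA 0 (w + cs s) n
  rw [statePerm_apply, statePerm_apply, run_shift s w n, add_apply, cs_apply]
  ring

lemma run_add (w v : V) : ∀ n, run nxtA 0 (w + v) n = run nxtA 0 w n + run nxtA 0 v n := by
  intro n
  induction n with
  | zero => show (0 : X3) = 0 + 0; rw [add_zero]
  | succ n ih =>
      rw [runA_succ, runA_succ, runA_succ, ih, add_apply]
      ring

/-- `a` as an additive equivalence. -/
def aL : V ≃+ V :=
  { (a : Equiv.Perm (ℕ → X3)) with
    map_add' := by
      intro w v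
      funext n
      show statePerm nxtA outA 0 (w + v) n = statePerm nxtA outA 0 w n + statePerm nxtA outA 0 v n
      rw [statePerm_apply, statePerm_apply, statePerm_apply, run_add, add_apply]
      ring }

lemma a_eq_toPerm : a = Additive.toMul (AddAut.toPerm V (aL : AddAut V)) := rfl

lemma aL_apply (w : V) : (aL : AddAut V) w = a w := rfl

end Analysis
section Translations

lemma T_mul (s t : V) : T s * T t = T (s + t) := by
  apply Equiv.ext
  intro w
  show (w + t) + s = w + (s + t)
  rw [add_assoc, add_comm t s]

lemma T_one : T 0 = 1 := by
  apply Equiv.ext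
  intro w
  show w + 0 = w
  rw [add_zero]

lemma T_inv (t : V) : (T t)⁻¹ = T (-t) := by
  rw [inv_eq_iff_mul_eq_one, T_mul, add_neg_cancel, T_one]

lemma T_zero_eq (t : V) (h : T t = 1) : t = 0 := by
  have := congrArg (fun e : Equiv.Perm (ℕ → X3) => e 0) h
  simpa [T_apply] using this

lemma T_pow (t : V) (k : ℕ) : (T t) ^ k = T (k • t) := by
  induction k with
  | zero => rw [pow_zero, zero_smul, T_one]
  | succ k ih => rw [pow_succ, ih, T_mul, succ_nsmul]

lemma conj_T (f : AddAut V) (t : V) :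
    Additive.toMul (AddAut.toPerm V f) * T t * (Additive.toMul (AddAut.toPerm V f))⁻¹ = T (f t) := by
  apply Equiv.ext
  intro w
  show f ((f.symm w) + t) = w + f t
  rw [map_add, AddEquiv.apply_symm_apply]

lemma a_zpow (k : ℤ) : a ^ k = Additive.toMul (AddAut.toPerm V (k • (aL : AddAut V))) := by
  rw [a_eq_toPerm, map_zsmul, toMul_zsmul]

lemma conj_T_zpow (k : ℤ) (t : V) :
    a ^ k * T t * a ^ (-k) = T ((k • (aL : AddAut V)) t) := by
  have h : a ^ (-k) = (a ^ k)⁻¹ := by rw [zpow_neg]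
  rw [h, a_zpow, conj_T]

lemma alpha_eq : α = T (cs 2) := by
  have hb : b = a * T (cs 1) := statePerm_eq 1
  have : α = (a * T (cs 1))⁻¹ * a := by rw [α, ← hb]
  rw [this, mul_inv_rev, T_inv, mul_assoc, inv_mul_cancel, mul_one]
  have h : -(cs 1) = cs 2 := by funext n; show -(1 : X3) = 2; decide
  rw [h]

lemma b_eq : b = a * α⁻¹ := by
  have h : cs 1 = -(cs 2) := by funext n; show (1 : X3) = -2; decide
  rw [alpha_eq, T_inv, show b = a * T (cs 1) from statePerm_eq 1, h]

lemma c_eq : c = a * α := by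
  rw [alpha_eq, show c = a * T (cs 2) from statePerm_eq 2]

end Translations
noncomputable section Poly
open Polynomial

/-- The operator `1 + shift` (multiplication by `1 + X`). -/
def PEh : AddMonoid.End V :=
  { toFun := fun w n => match n with | 0 => w 0 | n + 1 => w (n + 1) + w n
    map_zero' := by funext n; cases n <;> simp
    map_add' := by
      intro w v
      funext n
      cases n with
      | zero => rfl
      | succ n =>
          show (w + v) (n + 1) + (w + v) n = (w (n+1) + w n) + (v (n+1) + v n)
          rw [add_apply, add_apply]
          ring }

/-- The operator `1 - shift` (multiplication by `1 - X`). -/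
def QEh : AddMonoid.End V :=
  { toFun := fun w n => match n with | 0 => w 0 | n + 1 => w (n + 1) - w n
    map_zero' := by funext n; cases n <;> simp
    map_add' := by
      intro w v
      funext n
      cases n with
      | zero => rfl
      | succ n =>
          show (w + v) (n + 1) - (w + v) n = (w (n+1) - w n) + (v (n+1) - v n)
          rw [add_apply, add_apply]
          ring }

lemma PEh_apply_zero (w : V) : PEh w 0 = w 0 := rfl
lemma PEh_apply_succ (w : V) (n : ℕ) : PEh w (n + 1) = w (n + 1) + w n := rfl
lemma QEh_apply_zero (w : V) : QEh w 0 = w 0 := rfl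
lemma QEh_apply_succ (w : V) (n : ℕ) : QEh w (n + 1) = w (n + 1) - w n := rfl

/-- `a` as an additive endomorphism. -/
def AE : AddMonoid.End V := (aL : V ≃+ V).toAddMonoidHom

lemma AE_apply (w : V) : AE w = a w := rfl

lemma run_PEh (w : V) : ∀ n, run nxtA 0 (PEh w) (n + 1) = w n := by
  intro n
  induction n with
  | zero =>
      rw [runA_succ, PEh_apply_zero]
      show w 0 - 0 = w 0
      rw [sub_zero]
  | succ n ih =>
      rw [runA_succ, ih, PEh_apply_succ]
      ring

lemma a_PEh (w : V) : a (PEh w) = -(QEh w) := by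
  funext n
  show statePerm nxtA outA 0 (PEh w) n = -(QEh w) n
  rw [statePerm_apply]
  cases n with
  | zero =>
      show -(w 0) - 0 = -(w 0)
      rw [sub_zero]
  | succ n =>
      rw [run_PEh, PEh_apply_succ]
      show -(w (n+1) + w n) - w n = -(w (n+1) - w n)
      generalize w (n + 1) = y
      generalize w n = x
      revert x y
      decide

lemma AE_mul_PEh : AE * PEh = -QEh := by
  refine AddMonoidHom.ext fun w => ?_
  exact a_PEh w

lemma PEh_comm_QEh : Commute PEh QEh := by
  show PEh * QEh = QEh * PEh
  refine AddMonoidHom.ext fun w => funext fun n => ?_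
  show PEh (QEh w) n = QEh (PEh w) n
  cases n with
  | zero => rfl
  | succ n =>
      cases n with
      | zero =>
          show (w 1 - w 0) + w 0 = (w 1 + w 0) - w 0
          ring
      | succ m =>
          show (w (m+2) - w (m+1)) + (w (m+1) - w m) = (w (m+2) + w (m+1)) - (w (m+1) + w m)
          ring

lemma AE_negQEh_pow_PEh (m : ℕ) : AE * (-QEh) ^ m * PEh = (-QEh) ^ (m + 1) := by
  induction m with
  | zero => rw [pow_zero, mul_one, pow_one]; exact AE_mul_PEh
  | succ m ih =>
      have hc : Commute PEh (-QEh) := PEh_comm_QEh.neg_right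
      calc AE * (-QEh) ^ (m + 1) * PEh = (AE * (-QEh) ^ m) * ((-QEh) * PEh) := by
            rw [pow_succ]; simp only [mul_assoc]
        _ = (AE * (-QEh) ^ m) * (PEh * (-QEh)) := by rw [hc.eq]
        _ = (AE * (-QEh) ^ m * PEh) * (-QEh) := by simp only [mul_assoc]
        _ = (-QEh) ^ (m + 2) := by rw [ih, ← pow_succ]

lemma AE_pow_PEh_pow (m : ℕ) : AE ^ m * PEh ^ m = (-QEh) ^ m := by
  induction m with
  | zero => rw [pow_zero, pow_zero, pow_zero, mul_one]
  | succ m ih =>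
      calc AE ^ (m + 1) * PEh ^ (m + 1) = AE * (AE ^ m * PEh ^ m) * PEh := by
            rw [pow_succ', pow_succ]; simp only [mul_assoc]
        _ = AE * (-QEh) ^ m * PEh := by rw [ih]
        _ = (-QEh) ^ (m + 1) := AE_negQEh_pow_PEh m

lemma end_pow_apply_succ (f : AddMonoid.End V) (m : ℕ) (w : V) :
    (f ^ (m + 1)) w = (f ^ m) (f w) := by
  rw [pow_succ]; rfl

lemma AE_pow_apply (m : ℕ) (w : V) : (AE ^ m) w = (a ^ m) w := by
  induction m generalizing w with
  | zero => rfl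
  | succ m ih =>
      rw [end_pow_apply_succ, ih (AE w)]
      rw [pow_succ]
      rfl

lemma aL_zpow_apply (k : ℤ) (w : V) : (k • (aL : AddAut V)) w = (a ^ k) w := by
  rw [a_zpow]; rfl

lemma AP_main (m : ℕ) (w : V) : (a ^ m) ((PEh ^ m) w) = ((-QEh) ^ m) w := by
  rw [← AE_pow_apply]
  have := congrFun (congrArg (fun f : AddMonoid.End V => (f : V → V)) (AE_pow_PEh_pow m)) w
  exact this

lemma aL_neg_pow (m : ℕ) (w : V) :
    ((-(m : ℤ)) • (aL : AddAut V)) (((-QEh) ^ m) w) = (PEh ^ m) w := by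
  rw [← AP_main]
  have h1 : (a ^ (m : ℤ)) ((PEh ^ m) w) = (a ^ m) ((PEh ^ m) w) := by rw [zpow_natCast]
  rw [← h1, ← aL_zpow_apply]
  have : ((-(m:ℤ)) • (aL : AddAut V)) (((m:ℤ) • (aL : AddAut V)) ((PEh ^ m) w))
      = (((-(m:ℤ)) • (aL : AddAut V)) + ((m:ℤ) • (aL : AddAut V))) ((PEh ^ m) w) := rfl
  rw [this, ← add_zsmul, neg_add_cancel, zero_zsmul]
  rfl

/-- The coefficient-embedding of polynomials into `V`. -/
def Φ : Polynomial X3 →+ V where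
  toFun := fun p n => p.coeff n
  map_zero' := by funext n; simp
  map_add' := by intro p q; funext n; simp

lemma Φ_apply (p : Polynomial X3) (n : ℕ) : Φ p n = p.coeff n := rfl

lemma negQEh_apply (v : V) : (-QEh) v = -(QEh v) := rfl

lemma Φ_inj {p q : Polynomial X3} (h : Φ p = Φ q) : p = q :=
  Polynomial.ext fun n => congrFun h n

lemma PEh_Φ (p : Polynomial X3) : PEh (Φ p) = Φ ((X + 1) * p) := by
  funext n
  have hg : (X + 1) * p = p + X * p := by ring
  cases n with
  | zero =>
      rw [PEh_apply_zero, Φ_apply, Φ_apply, hg, coeff_add, mul_coeff_zero, coeff_X_zero,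
        zero_mul, add_zero]
  | succ n =>
      rw [PEh_apply_succ, Φ_apply, Φ_apply, Φ_apply, hg, coeff_add, coeff_X_mul]

lemma negQEh_Φ (p : Polynomial X3) : (-QEh) (Φ p) = Φ ((X - 1) * p) := by
  rw [negQEh_apply]
  funext n
  have hg : (X - 1) * p = -(p + -(X * p)) := by ring
  have hneg : ∀ (v : V) (j : ℕ), (-v) j = -(v j) := fun _ _ => rfl
  cases n with
  | zero =>
      rw [hneg, QEh_apply_zero, Φ_apply, Φ_apply, hg, coeff_neg, coeff_add, coeff_neg,
        mul_coeff_zero, coeff_X_zero, zero_mul, neg_zero, add_zero]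
  | succ n =>
      rw [hneg, QEh_apply_succ, Φ_apply, Φ_apply, Φ_apply, hg, coeff_neg, coeff_add, coeff_neg,
        coeff_X_mul]
      ring

lemma PEh_pow_Φ (m : ℕ) (p : Polynomial X3) : (PEh ^ m) (Φ p) = Φ ((X + 1) ^ m * p) := by
  induction m generalizing p with
  | zero => rw [pow_zero, pow_zero, one_mul]; rfl
  | succ m ih =>
      rw [end_pow_apply_succ, PEh_Φ, ih, ← mul_assoc, ← pow_succ]

lemma negQEh_pow_Φ (m : ℕ) (p : Polynomial X3) : ((-QEh) ^ m) (Φ p) = Φ ((X - 1) ^ m * p) := by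
  induction m generalizing p with
  | zero => rw [pow_zero, pow_zero, one_mul]; rfl
  | succ m ih =>
      rw [end_pow_apply_succ, negQEh_Φ, ih, ← mul_assoc, ← pow_succ]

lemma a_zpow_eq_one {k : ℤ} (h : a ^ k = 1) : k = 0 := by
  have hA : a ^ (k.natAbs : ℤ) = 1 := by
    rcases Int.natAbs_eq k with he | he
    · rw [← he, h]
    · rw [← neg_neg ((k.natAbs : ℤ)), ← he, zpow_neg, h, inv_one]
  rw [zpow_natCast] at hA
  have : k.natAbs = 0 := by
    by_contra hm
    have h1 : Φ ((X + 1) ^ k.natAbs * 1) = Φ ((X - 1) ^ k.natAbs * 1) := by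
      rw [← PEh_pow_Φ, ← negQEh_pow_Φ, ← AP_main, hA]
      rfl
    have h2 := congrArg (Polynomial.eval (-1 : X3)) (Φ_inj h1)
    rw [mul_one, mul_one, eval_pow, eval_pow, eval_add, eval_sub, eval_X, eval_one] at h2
    rw [neg_add_cancel, zero_pow hm] at h2
    have : ((-1 : X3) - 1) ^ k.natAbs = 1 := by
      have : (-1 : X3) - 1 = 1 := by decide
      rw [this, one_pow]
    rw [this] at h2
    exact absurd h2.symm one_ne_zero
  omega

/-- Partial-sum operator (multiplication by `1/(1-X)`). -/
def Sm (w : V) : V := fun n => ∑ j ∈ Finset.range (n + 1), w j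

lemma QEh_Sm (w : V) : QEh (Sm w) = w := by
  funext n
  cases n with
  | zero =>
      show ∑ j ∈ Finset.range 1, w j = w 0
      rw [Finset.sum_range_one]
  | succ n =>
      show Sm w (n + 1) - Sm w n = w (n + 1)
      rw [Sm, Sm, Finset.sum_range_succ]
      ring

/-- `usq m` has symbol `(-1)^m 2/(1-X)^(m+1)`. -/
def usq : ℕ → V
  | 0 => cs 2
  | m + 1 => -(Sm (usq m))

lemma negQEh_pow_usq (m : ℕ) : ((-QEh) ^ m) (usq m) = cs 2 := by
  induction m with
  | zero => rfl
  | succ m ih =>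
      have h1 : (-QEh) (usq (m + 1)) = usq m := by
        show (-QEh) (-(Sm (usq m))) = usq m
        rw [negQEh_apply, map_neg, neg_neg, QEh_Sm]
      rw [end_pow_apply_succ, h1, ih]

end Poly
noncomputable section Indep
open Polynomial

lemma end_mul_apply (f g : AddMonoid.End V) (v : V) : (f * g) v = f (g v) := rfl

/-- The translation vector of the conjugate `a^{-n} α a^{n}`. -/
def cvec (n : ℤ) : V := ((-n) • (aL : AddAut V)) (cs 2)

lemma conj_alpha (n : ℤ) : a ^ (-n) * α * a ^ n = T (cvec n) := by
  have h := conj_T_zpow (-n) (cs 2)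
  rw [neg_neg] at h
  rw [alpha_eq]
  exact h

lemma three_nsmul (v : V) : (3 : ℕ) • v = 0 := by
  funext n
  have h : ∀ x : X3, (3 : ℕ) • x = 0 := by decide
  show (3 : ℕ) • (v n) = 0
  exact h (v n)

lemma three_zsmul (v : V) : ((3 : ℕ) : ℤ) • v = 0 := by
  rw [natCast_zsmul]
  exact three_nsmul v

/-- Per-index component of the lamp-configuration homomorphism. -/
def Fn (n : ℤ) : ZMod 3 →+ V :=
  ZMod.lift 3 ⟨zmultiplesHom V (cvec n), three_zsmul (cvec n)⟩

lemma Fn_apply (n : ℤ) (e : ZMod 3) : Fn n e = e.val • cvec n := by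
  have he : (((e.val : ℕ) : ℤ) : ZMod 3) = e := by
    rw [Int.cast_natCast]
    exact ZMod.natCast_rightInverse e
  calc Fn n e = Fn n ((((e.val : ℕ) : ℤ) : ZMod 3)) := by rw [he]
    _ = (zmultiplesHom V (cvec n)) ((e.val : ℕ) : ℤ) := ZMod.lift_coe _ _ _
    _ = ((e.val : ℕ) : ℤ) • cvec n := zmultiplesHom_apply _ _ _
    _ = e.val • cvec n := natCast_zsmul _ _

/-- The lamp-configuration homomorphism into `V`. -/
def Atil : (ℤ →₀ ZMod 3) →+ V := Finsupp.liftAddHom Fn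

lemma Atil_apply (t : ℤ →₀ ZMod 3) : Atil t = t.sum fun n e => e.val • cvec n := by
  rw [Atil, Finsupp.liftAddHom_apply]
  exact Finsupp.sum_congr fun n _ => Fn_apply n (t n)

lemma QEh_cs2 : (-QEh) (cs 2) = Φ 1 := by
  rw [negQEh_apply]
  funext n
  have hneg : ∀ (v : V) (j : ℕ), (-v) j = -(v j) := fun _ _ => rfl
  cases n with
  | zero =>
      rw [hneg, QEh_apply_zero, Φ_apply, coeff_one]
      decide
  | succ n =>
      rw [hneg, QEh_apply_succ, Φ_apply, coeff_one]
      have : cs 2 (n + 1) - cs 2 n = 0 := by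
        show (2 : X3) - 2 = 0
        decide
      rw [this, neg_zero]
      simp

lemma step4 (mn d : ℕ) (hle : mn ≤ d) :
    ((-QEh) ^ (d + 1)) ((PEh ^ mn) (usq mn)) = Φ ((X + 1) ^ mn * (X - 1) ^ (d - mn)) := by
  have hc : Commute ((-QEh) ^ (d + 1)) (PEh ^ mn) :=
    (PEh_comm_QEh.neg_right.symm).pow_pow _ _
  rw [← end_mul_apply, hc.eq, show d + 1 = ((d - mn) + 1) + mn by omega, pow_add,
    end_mul_apply, end_mul_apply, negQEh_pow_usq, pow_succ, end_mul_apply,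
    QEh_cs2, negQEh_pow_Φ, PEh_pow_Φ]
  congr 1
  ring

lemma Atil_eq_zero {t : ℤ →₀ ZMod 3} (h : Atil t = 0) : t = 0 := by
  by_contra ht
  have hne : t.support.Nonempty := Finsupp.support_nonempty_iff.mpr ht
  have hk0 : t.support.min' hne ∈ t.support := t.support.min'_mem hne
  set k0 := t.support.min' hne with hk0def
  set K := t.support.max' hne with hKdef
  set d : ℕ := (K - k0).toNat with hddef
  set m : ℤ → ℕ := fun n => (n - k0).toNat with hmdef
  set E := (k0 • (aL : AddAut V)) with hEdef
  -- each term collapses to a polynomial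
  have key : ∀ n ∈ t.support, ∀ e : ZMod 3,
      ((-QEh) ^ (d + 1)) (E (e.val • cvec n)) =
      Φ (e.val • ((X + 1) ^ (m n) * (X - 1) ^ (d - m n))) := by
    intro n hn e
    have hk : k0 ≤ n := t.support.min'_le n hn
    have hK : n ≤ K := t.support.le_max' n hn
    have hmd : m n ≤ d := by simp only [hmdef, hddef]; omega
    have hE : E (cvec n) = (PEh ^ (m n)) (usq (m n)) := by
      have h2 : E (cvec n) = ((k0 + -n) • (aL : AddAut V)) (cs 2) := by
        rw [add_zsmul]; rfl
      have h3 : k0 + -n = -(((m n : ℕ) : ℤ)) := by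
        simp only [hmdef]; omega
      rw [h2, h3, ← negQEh_pow_usq (m n), aL_neg_pow]
    rw [map_nsmul, hE, map_nsmul, step4 (m n) d hmd, map_nsmul]
  -- assemble into one polynomial identity
  have hsum : t.sum (fun n e => ((-QEh) ^ (d + 1)) (E (e.val • cvec n))) = 0 := by
    rw [← map_finsuppSum, ← map_finsuppSum, ← Atil_apply, h, map_zero, map_zero]
  have hpoly : t.sum (fun n e => e.val • ((X + 1 : Polynomial X3) ^ (m n) * (X - 1) ^ (d - m n))) = 0 := by
    apply Φ_inj
    rw [map_finsuppSum, map_zero]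
    rw [← hsum]
    exact Finsupp.sum_congr fun n hn => (key n hn (t n)).symm
  -- evaluate at -1
  have heval := congrArg (Polynomial.eval (-1 : X3)) hpoly
  rw [Finsupp.sum, Polynomial.eval_finset_sum, eval_zero] at heval
  rw [Finset.sum_eq_single_of_mem k0 hk0] at heval
  · have hm0 : m k0 = 0 := by simp only [hmdef]; omega
    rw [hm0, pow_zero, one_mul, eval_smul, eval_pow, eval_sub, eval_X, eval_one] at heval
    have h11 : ((-1 : X3) - 1) = 1 := by decide
    rw [h11, one_pow, nsmul_eq_mul, mul_one] at heval
    have hcast : ∀ e : ZMod 3, (((e.val : ℕ) : X3)) = 0 → e = 0 := by decide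
    exact (Finsupp.mem_support_iff.mp hk0) (hcast _ heval)
  · intro b hb hbne
    have hk : k0 ≤ b := t.support.min'_le b hb
    have hmb : m b ≠ 0 := by
      simp only [hmdef]
      omega
    rw [eval_smul, eval_mul, eval_pow, eval_add, eval_X, eval_one, neg_add_cancel,
      zero_pow hmb, zero_mul, smul_zero]

end Indep
section GroupTheory

/-- The free group on two generators. -/
abbrev F2 := FreeGroup (Fin 2)

/-- The relator set of the presentation. -/
abbrev Rset : Set F2 :=
  {w : F2 |
    w = (FreeGroup.of (1 : Fin 2)) ^ 3 ∨
    ∃ n m : ℤ,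
      w = ⁅(FreeGroup.of (0 : Fin 2)) ^ (-n) * FreeGroup.of (1 : Fin 2) *
            (FreeGroup.of (0 : Fin 2)) ^ n,
           (FreeGroup.of (0 : Fin 2)) ^ (-m) * FreeGroup.of (1 : Fin 2) *
            (FreeGroup.of (0 : Fin 2)) ^ m⁆}

/-- The evaluation homomorphism of the presentation. -/
abbrev lf : F2 →* Equiv.Perm (ℕ → X3) := FreeGroup.lift ![a, α]

lemma lf_x : lf (FreeGroup.of (0 : Fin 2)) = a := FreeGroup.lift_apply_of
lemma lf_y : lf (FreeGroup.of (1 : Fin 2)) = α := FreeGroup.lift_apply_of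

lemma lf_conj (n : ℤ) :
    lf ((FreeGroup.of (0 : Fin 2)) ^ (-n) * FreeGroup.of (1 : Fin 2) *
      (FreeGroup.of (0 : Fin 2)) ^ n) = T (cvec n) := by
  rw [map_mul, map_mul, map_zpow, map_zpow, lf_x, lf_y]
  exact conj_alpha n

lemma alpha_cubed : α ^ 3 = 1 := by
  rw [alpha_eq, T_pow, three_nsmul, T_one]

lemma Rset_subset_ker : Rset ⊆ (lf.ker : Set F2) := by
  rintro w (rfl | ⟨n, m, rfl⟩)
  · show lf _ = 1
    rw [map_pow, lf_y, alpha_cubed]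
  · show lf _ = 1
    rw [map_commutatorElement, lf_conj, lf_conj, commutatorElement_eq_one_iff_commute]
    show T (cvec n) * T (cvec m) = T (cvec m) * T (cvec n)
    rw [T_mul, T_mul, add_comm]

/-- The presented group. -/
abbrev Qg := F2 ⧸ Subgroup.normalClosure Rset

/-- The quotient map. -/
abbrev qh : F2 →* Qg := QuotientGroup.mk' _

/-- The image of the first generator. -/
def Xg : Qg := qh (FreeGroup.of 0)

/-- The image of the second generator. -/
def Yg : Qg := qh (FreeGroup.of 1)

/-- The conjugates of `Yg` by powers of `Xg`. -/
def Yn (n : ℤ) : Qg := Xg ^ (-n) * Yg * Xg ^ n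

/-- The "lamp" subgroup of the presented group. -/
def Mg : Subgroup Qg := Subgroup.closure (Set.range Yn)

/-- The induced map on the quotient. -/
def fbar : Qg →* Equiv.Perm (ℕ → X3) :=
  QuotientGroup.lift _ lf (Subgroup.normalClosure_le_normal Rset_subset_ker)

lemma fbar_mk (w : F2) : fbar (qh w) = lf w := rfl

lemma rel_one {w : F2} (hw : w ∈ Rset) : qh w = 1 :=
  (QuotientGroup.eq_one_iff w).2 (Subgroup.subset_normalClosure hw)

lemma Yg_cubed : Yg ^ 3 = 1 := by
  rw [Yg, ← map_pow]
  exact rel_one (Or.inl rfl)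

lemma Yn_mk (n : ℤ) : Yn n = qh ((FreeGroup.of (0 : Fin 2)) ^ (-n) * FreeGroup.of (1 : Fin 2) *
    (FreeGroup.of (0 : Fin 2)) ^ n) := by
  rw [map_mul, map_mul, map_zpow, map_zpow]
  rfl

lemma Yn_commute (n m : ℤ) : Commute (Yn n) (Yn m) := by
  rw [← commutatorElement_eq_one_iff_commute, Yn_mk, Yn_mk, ← map_commutatorElement]
  exact rel_one (Or.inr ⟨n, m, rfl⟩)

lemma Yn_cubed (n : ℤ) : Yn n ^ 3 = 1 := by
  have h : Yn n = Xg ^ (-n) * Yg * (Xg ^ (-n))⁻¹ := by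
    show Xg ^ (-n) * Yg * Xg ^ n = Xg ^ (-n) * Yg * (Xg ^ (-n))⁻¹
    congr 1
    rw [zpow_neg, inv_inv]
  rw [h, conj_pow, Yg_cubed, mul_one, mul_inv_cancel]

lemma fbar_X : fbar Xg = a := lf_x

lemma fbar_Yn (n : ℤ) : fbar (Yn n) = T (cvec n) := by
  rw [Yn_mk, fbar_mk]
  exact lf_conj n

lemma Yn_mem_Mg (n : ℤ) : Yn n ∈ Mg := Subgroup.subset_closure (Set.mem_range_self n)

/-- `Mg` is commutative. -/
instance : CommGroup ↥Mg :=
  Subgroup.closureCommGroupOfComm (k := Set.range Yn) (by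
    rintro x ⟨n, rfl⟩ y ⟨m, rfl⟩
    exact Yn_commute n m)

/-- `Yn n` as an element of `Mg`. -/
def YnM (n : ℤ) : ↥Mg := ⟨Yn n, Yn_mem_Mg n⟩

lemma YnM_cubed (n : ℤ) : YnM n ^ 3 = 1 := by
  apply Subtype.ext
  show (Yn n : Qg) ^ 3 = 1
  exact Yn_cubed n

lemma pow_val_add {G : Type*} [Group G] (g : G) (hg : g ^ 3 = 1) (e e' : ZMod 3) :
    g ^ (e + e').val = g ^ e.val * g ^ e'.val := by
  rw [← pow_add, ZMod.val_add]
  conv_rhs => rw [← Nat.div_add_mod (e.val + e'.val) 3]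
  rw [pow_add, pow_mul, hg, one_pow, one_mul]

/-- The "lamp configuration" map into `Mg`. -/
noncomputable def JQf (t : ℤ →₀ ZMod 3) : ↥Mg := t.prod fun n e => YnM n ^ e.val

lemma JQf_zero : JQf 0 = 1 := Finsupp.prod_zero_index

lemma JQf_single (n : ℤ) (e : ZMod 3) : JQf (Finsupp.single n e) = YnM n ^ e.val := by
  rw [JQf, Finsupp.prod_single_index]
  rw [ZMod.val_zero]; exact pow_zero _

lemma JQf_add (t t' : ℤ →₀ ZMod 3) : JQf (t + t') = JQf t * JQf t' := by
  rw [JQf, JQf, JQf, Finsupp.prod_add_index]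
  · rfl
  · intro n _
    rw [ZMod.val_zero]; exact pow_zero _
  · intro n _ e e'
    exact pow_val_add (YnM n) (YnM_cubed n) e e'

lemma Atil_single (n : ℤ) (e : ZMod 3) : Atil (Finsupp.single n e) = e.val • cvec n := by
  rw [Atil, Finsupp.liftAddHom_apply_single]
  exact Fn_apply n e

lemma fbar_JQf (t : ℤ →₀ ZMod 3) : fbar ((JQf t : ↥Mg) : Qg) = T (Atil t) := by
  induction t using Finsupp.induction with
  | zero => rw [JQf_zero, map_zero]; show fbar 1 = T 0; rw [map_one, T_one]
  | single_add n e t hnt he ih =>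
      rw [JQf_add, map_add, JQf_single]
      have hcoe : ((YnM n ^ e.val * JQf t : ↥Mg) : Qg)
          = ((YnM n ^ e.val : ↥Mg) : Qg) * ((JQf t : ↥Mg) : Qg) := rfl
      rw [hcoe, map_mul, ih]
      have hc : ((YnM n ^ e.val : ↥Mg) : Qg) = Yn n ^ e.val := rfl
      rw [hc, map_pow, fbar_Yn, T_pow, Atil_single, T_mul]

/-- Every element of `Mg` is a lamp configuration. -/
lemma Mg_surj {g : Qg} (hg : g ∈ Mg) : ∃ t : ℤ →₀ ZMod 3, ((JQf t : ↥Mg) : Qg) = g := by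
  induction hg using Subgroup.closure_induction with
  | mem x hx =>
      obtain ⟨n, rfl⟩ := hx
      refine ⟨Finsupp.single n 1, ?_⟩
      rw [JQf_single]
      show (Yn n : Qg) ^ ((1 : ZMod 3)).val = Yn n
      rw [ZMod.val_one, pow_one]
  | one => exact ⟨0, by rw [JQf_zero]; rfl⟩
  | mul x y hx hy ihx ihy =>
      obtain ⟨t1, ht1⟩ := ihx
      obtain ⟨t2, ht2⟩ := ihy
      exact ⟨t1 + t2, by rw [JQf_add]; push_cast [← ht1, ← ht2]; rfl⟩
  | inv x hx ihx =>
      obtain ⟨t1, ht1⟩ := ihx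
      refine ⟨-t1, ?_⟩
      have h1 : JQf (-t1) * JQf t1 = 1 := by rw [← JQf_add, neg_add_cancel, JQf_zero]
      have h2 : JQf (-t1) = (JQf t1)⁻¹ := eq_inv_of_mul_eq_one_left h1
      rw [h2, ← ht1]
      rfl

/-- Conjugation by powers of `Xg` preserves `Mg`. -/
lemma conj_Mg (k : ℤ) {g : Qg} (hg : g ∈ Mg) : Xg ^ k * g * Xg ^ (-k) ∈ Mg := by
  induction hg using Subgroup.closure_induction with
  | mem x hx =>
      obtain ⟨n, rfl⟩ := hx
      have h : Xg ^ k * Yn n * Xg ^ (-k) = Yn (n - k) := by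
        rw [Yn, Yn]
        group
      rw [h]
      exact Yn_mem_Mg (n - k)
  | one =>
      rw [mul_one, ← zpow_add, add_neg_cancel, zpow_zero]
      exact Mg.one_mem
  | mul x y hx hy ihx ihy =>
      have h : Xg ^ k * (x * y) * Xg ^ (-k)
          = (Xg ^ k * x * Xg ^ (-k)) * (Xg ^ k * y * Xg ^ (-k)) := by group
      rw [h]
      exact Mg.mul_mem ihx ihy
  | inv x hx ihx =>
      have h : Xg ^ k * x⁻¹ * Xg ^ (-k) = (Xg ^ k * x * Xg ^ (-k))⁻¹ := by group
      rw [h]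
      exact Mg.inv_mem ihx

/-- The subgroup of elements of the form `m * Xg^k`. -/
def Pset : Subgroup Qg where
  carrier := {g | ∃ mm ∈ Mg, ∃ k : ℤ, g = mm * Xg ^ k}
  one_mem' := ⟨1, Mg.one_mem, 0, by rw [zpow_zero, one_mul]⟩
  mul_mem' := by
    rintro g h ⟨m1, hm1, k1, rfl⟩ ⟨m2, hm2, k2, rfl⟩
    refine ⟨m1 * (Xg ^ k1 * m2 * Xg ^ (-k1)), Mg.mul_mem hm1 (conj_Mg k1 hm2), k1 + k2, by group⟩
  inv_mem' := by
    rintro g ⟨m1, hm1, k, rfl⟩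
    exact ⟨Xg ^ (-k) * m1⁻¹ * Xg ^ (- -k), conj_Mg (-k) (Mg.inv_mem hm1), -k, by group⟩

lemma Pset_top (g : Qg) : g ∈ Pset := by
  obtain ⟨w, rfl⟩ := QuotientGroup.mk'_surjective (Subgroup.normalClosure Rset) g
  have hw : w ∈ Subgroup.closure (Set.range (FreeGroup.of : Fin 2 → F2)) := by
    rw [FreeGroup.closure_range_of]
    exact Subgroup.mem_top w
  induction hw using Subgroup.closure_induction with
  | mem x hx =>
      obtain ⟨i, rfl⟩ := hx
      fin_cases i
      · refine ⟨1, Mg.one_mem, 1, ?_⟩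
        rw [zpow_one, one_mul]
        rfl
      · refine ⟨Yn 0, Yn_mem_Mg 0, 0, ?_⟩
        show qh (FreeGroup.of (1 : Fin 2)) = Yn 0 * Xg ^ (0 : ℤ)
        rw [Yn, neg_zero, zpow_zero, one_mul, mul_one, mul_one]
        rfl
  | one => rw [map_one]; exact Pset.one_mem
  | mul x y hx hy ihx ihy => rw [map_mul]; exact Pset.mul_mem ihx ihy
  | inv x hx ihx => rw [map_inv]; exact Pset.inv_mem ihx

end GroupTheory
section Final

lemma a_zpow_zero_seq (k : ℤ) : (a ^ k) (0 : V) = 0 := by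
  rw [a_zpow]
  show (k • (aL : AddAut V)) 0 = 0
  exact map_zero _

lemma ker_eq : lf.ker = Subgroup.normalClosure Rset := by
  apply le_antisymm
  · intro w hw
    have hmem : qh w ∈ Pset := Pset_top (qh w)
    obtain ⟨mm, hmm, k, hkeq⟩ := hmem
    obtain ⟨t, ht⟩ := Mg_surj hmm
    have h1 : fbar (qh w) = 1 := by
      rw [fbar_mk]
      exact hw
    rw [hkeq, map_mul, ← ht, fbar_JQf, map_zpow, fbar_X] at h1
    have h2 : (T (Atil t) * a ^ k) (0 : V) = (0 : V) + Atil t := by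
      show T (Atil t) ((a ^ k) (0 : V)) = _
      rw [a_zpow_zero_seq, T_apply]
    have h3 : Atil t = 0 := by
      rw [h1] at h2
      have h4 : (0 : V) = 0 + Atil t := h2
      rw [zero_add] at h4
      exact h4.symm
    have hT : T (Atil t) = 1 := by rw [h3, T_one]
    rw [hT, one_mul] at h1
    have hk : k = 0 := a_zpow_eq_one h1
    have hm1 : mm = 1 := by
      rw [← ht, Atil_eq_zero h3, JQf_zero]
      rfl
    have hq1 : qh w = 1 := by rw [hkeq, hm1, hk, zpow_zero, one_mul]
    exact (QuotientGroup.eq_one_iff w).1 hq1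
  · exact Subgroup.normalClosure_le_normal Rset_subset_ker

lemma range_eq : lf.range = GA := by
  rw [FreeGroup.range_lift_eq_closure]
  have hr : Set.range ![a, α] = {a, α} := by
    ext g
    constructor
    · rintro ⟨i, rfl⟩
      fin_cases i
      · exact Or.inl rfl
      · exact Or.inr rfl
    · rintro (rfl | rfl)
      · exact ⟨0, rfl⟩
      · exact ⟨1, rfl⟩
  rw [hr, GA]
  apply le_antisymm
  · rw [Subgroup.closure_le]
    rintro g (rfl | rfl)
    · exact Subgroup.subset_closure (by left; rfl)
    · show b⁻¹ * a ∈ Subgroup.closure {a, b, c}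
      exact Subgroup.mul_mem _
        (Subgroup.inv_mem _ (Subgroup.subset_closure (by right; left; rfl)))
        (Subgroup.subset_closure (by left; rfl))
  · rw [Subgroup.closure_le]
    rintro g (rfl | rfl | rfl)
    · exact Subgroup.subset_closure (by left; rfl)
    · rw [b_eq]
      exact Subgroup.mul_mem _ (Subgroup.subset_closure (by left; rfl))
        (Subgroup.inv_mem _ (Subgroup.subset_closure (by right; rfl)))
    · rw [c_eq]
      exact Subgroup.mul_mem _ (Subgroup.subset_closure (by left; rfl))
        (Subgroup.subset_closure (by right; rfl))

end Final

/-- `G_A` admits the presentation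
`⟨x, y ∣ y³, [x⁻ⁿyxⁿ, x⁻ᵐyxᵐ] (n, m ∈ ℤ)⟩`: the homomorphism from the free group
on two generators sending `x ↦ a`, `y ↦ α` has range `G_A`, and its kernel is the
normal closure of `{y³} ∪ {[x⁻ⁿyxⁿ, x⁻ᵐyxᵐ] : n, m ∈ ℤ}`. -/
theorem GA_presentation :
    (FreeGroup.lift (![a, α] : Fin 2 → Equiv.Perm (ℕ → X3))).range = GA ∧
    (FreeGroup.lift (![a, α] : Fin 2 → Equiv.Perm (ℕ → X3))).ker =
      Subgroup.normalClosure
        {w : FreeGroup (Fin 2) |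
          w = (FreeGroup.of (1 : Fin 2)) ^ 3 ∨
          ∃ n m : ℤ,
            w = ⁅(FreeGroup.of (0 : Fin 2)) ^ (-n) * FreeGroup.of (1 : Fin 2) *
                  (FreeGroup.of (0 : Fin 2)) ^ n,
                 (FreeGroup.of (0 : Fin 2)) ^ (-m) * FreeGroup.of (1 : Fin 2) *
                  (FreeGroup.of (0 : Fin 2)) ^ m⁆} := by
  exact ⟨range_eq, ker_eq⟩

end Lamplighter
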